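/- Let r_i be an uncovered request with at least two children, and let j,k ∈ suns(i) with k<j. Then t_j−ρ(j) ≥ t_k+4·ρ(k). -/
import Mathlib


open Finset

/-- A replica is a pair `(v, t)` of a network node and a time. -/
abbrev Replica : Type := ℕ × ℕ

/-- A (directed) grid edge is a pair of replicas. -/
abbrev GEdge : Type := Replica × Replica

/-- Horizontal directed edge `((v,t),(v+1,t))`. -/
def isHoriz (e : GEdge) : Prop := e.2 = (e.1.1 + 1, e.1.2)

/-- Vertical arc `((v,t),(v,t+1))`. -/
def isArc (e : GEdge) : Prop := e.2 = (e.1.1, e.1.2 + 1)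

def isGridEdge (e : GEdge) : Prop := isHoriz e ∨ isArc e

/-- The quarter ball `B(r,ρ)`: replicas `(u,s)` with `u ≤ v`, `s ≤ t` and
`(v−u)+(t−s) ≤ ρ`. -/
def qball (r : Replica) (ρ : ℕ) : Set Replica :=
  {q | q.1 ≤ r.1 ∧ q.2 ≤ r.2 ∧ (r.1 - q.1) + (r.2 - q.2) ≤ ρ}

/-- Grid edges with both endpoints in the quarter ball `B(r,ρ)`. -/
def ballEdge (r : Replica) (ρ : ℕ) (e : GEdge) : Prop :=
  isGridEdge e ∧ e.1 ∈ qball r ρ ∧ e.2 ∈ qball r ρ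

/-- Two quarter balls are edge-disjoint if they share no grid edge. -/
def BallsEdgeDisjoint (r : Replica) (ρ : ℕ) (r' : Replica) (ρ' : ℕ) : Prop :=
  ∀ e : GEdge, ¬ (ballEdge r ρ e ∧ ballEdge r' ρ' e)

/-- The square `Sq(r,ρ) = [v−ρ,v] × [t−ρ,t]`. -/
def SqRect (r : Replica) (ρ : ℕ) : Set Replica :=
  {q | r.1 - ρ ≤ q.1 ∧ q.1 ≤ r.1 ∧ r.2 - ρ ≤ q.2 ∧ q.2 ≤ r.2}

/-- Directed `L∞` distance `d∞(q,r)`: `max(v−u, t−s)` if `u ≤ v` and `s ≤ t`,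
and `∞` otherwise. -/
def distInf (q r : Replica) : ℕ∞ :=
  if q.1 ≤ r.1 ∧ q.2 ≤ r.2 then ((max (r.1 - q.1) (r.2 - q.2) : ℕ) : ℕ∞) else ⊤

/-- The replicas of an edge set: `(0,0)` together with all endpoints of its edges. -/
def Repl (F : Finset GEdge) : Set Replica :=
  insert ((0, 0) : Replica) {q | ∃ e ∈ F, q = e.1 ∨ q = e.2}

/-- The arcs of the vertical path at node `u` from time `s` to time `τ`. -/
def vertPath (u s τ : ℕ) : Finset GEdge :=
  (Finset.range (τ - s)).image (fun k => ((u, s + k), (u, s + k + 1)))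

/-- The horizontal edges of the path at time `τ` from node `u` to node `w`. -/
def horizPath (τ u w : ℕ) : Finset GEdge :=
  (Finset.range (w - u)).image (fun k => ((u + k, τ), (u + k + 1, τ)))

/-- A directed path from `a` to `b` all of whose edges belong to `F`. -/
def PathIn (F : Finset GEdge) (a b : Replica) : Prop :=
  ∃ (L : ℕ) (f : ℕ → Replica), f 0 = a ∧ f L = b ∧ ∀ k < L, (f k, f (k + 1)) ∈ F

/-- An execution of Algorithm `Square` on a request sequence
`r_1 = (v 1, t 1), …, r_N = (v N, t N)` (with `t 0 = 0` and nondecreasing times).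
`sol i` is the edge set after handling request `i`; `ρ i` is the radius of
request `i`; `(u' i, s' i)` is its closest replica and `(us i, ss i)` its
serving replica.  The fields record the specification SQ1–SQ5. -/
structure SquareRun where
  N : ℕ
  v : ℕ → ℕ
  t : ℕ → ℕ
  ρ : ℕ → ℕ
  u' : ℕ → ℕ
  s' : ℕ → ℕ
  us : ℕ → ℕ
  ss : ℕ → ℕ
  sol : ℕ → Finset GEdge
  t_zero : t 0 = 0
  t_mono : ∀ i j, i ≤ j → j ≤ N → t i ≤ t j
  sol_zero : sol 0 = ∅
  /-- SQ2: `ρ i` is a lower bound on the distance from every replica of the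
  current solution (after the SQ1 additions) to `r_i`. -/
  rho_min : ∀ i, 1 ≤ i → i ≤ N →
    ∀ q ∈ Repl (sol (i - 1) ∪ vertPath 0 (t (i - 1)) (t i)),
      (ρ i : ℕ∞) ≤ distInf q (v i, t i)
  /-- SQ2: the closest replica belongs to the current solution. -/
  closest_mem : ∀ i, 1 ≤ i → i ≤ N →
    (u' i, s' i) ∈ Repl (sol (i - 1) ∪ vertPath 0 (t (i - 1)) (t i))
  /-- SQ2: the closest replica attains the radius. -/
  closest_dist : ∀ i, 1 ≤ i → i ≤ N →
    distInf (u' i, s' i) (v i, t i) = (ρ i : ℕ∞)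
  /-- SQ2: among replicas of node `u' i`, the closest replica is the latest. -/
  closest_late : ∀ i, 1 ≤ i → i ≤ N → ∀ s, s ≤ t i →
    (u' i, s) ∈ Repl (sol (i - 1) ∪ vertPath 0 (t (i - 1)) (t i)) → s ≤ s' i
  /-- SQ3: the serving replica is in the current solution and in `Sq(r_i, 5ρ i)`. -/
  serv_mem : ∀ i, 1 ≤ i → i ≤ N →
    (us i, ss i) ∈ Repl (sol (i - 1) ∪ vertPath 0 (t (i - 1)) (t i)) ∧
      (us i, ss i) ∈ SqRect (v i, t i) (5 * ρ i)
  /-- SQ3: the serving node is leftmost. -/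
  serv_min : ∀ i, 1 ≤ i → i ≤ N →
    ∀ q ∈ Repl (sol (i - 1) ∪ vertPath 0 (t (i - 1)) (t i)),
      q ∈ SqRect (v i, t i) (5 * ρ i) → us i ≤ q.1
  /-- SQ3: among those, the serving time is latest. -/
  serv_late : ∀ i, 1 ≤ i → i ≤ N →
    ∀ q ∈ Repl (sol (i - 1) ∪ vertPath 0 (t (i - 1)) (t i)),
      q ∈ SqRect (v i, t i) (5 * ρ i) → q.1 = us i → q.2 ≤ ss i
  /-- SQ1 + SQ4 + SQ5: the edges added while handling request `i`. -/
  step : ∀ i, 1 ≤ i → i ≤ N →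
    sol i = (sol (i - 1) ∪ vertPath 0 (t (i - 1)) (t i))
      ∪ vertPath (us i) (ss i) (t i) ∪ horizPath (t i) (us i) (v i)
      ∪ vertPath (us i) (t i) (t i + 4 * ρ i)

namespace SquareRun

variable (S : SquareRun)

/-- The `i`-th request replica. -/
def req (i : ℕ) : Replica := (S.v i, S.t i)

/-- The edges added in steps SQ4 and SQ5 while handling request `i`. -/
def added45 (i : ℕ) : Finset GEdge :=
  vertPath (S.us i) (S.ss i) (S.t i) ∪ horizPath (S.t i) (S.us i) (S.v i)
    ∪ vertPath (S.us i) (S.t i) (S.t i + 4 * S.ρ i)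

/-- Request `i` is covered if `v_i − u^s_i ≥ ρ(i)`. -/
def covered (i : ℕ) : Prop := S.ρ i ≤ S.v i - S.us i

def uncovered (i : ℕ) : Prop := ¬ S.covered i

/-- A feasible solution of the DMCD instance given by the requests of `S`. -/
def Feasible (F : Finset GEdge) : Prop :=
  (∀ e ∈ F, isGridEdge e) ∧
  (∀ i, 1 ≤ i → i ≤ S.N → PathIn F (0, 0) (S.req i)) ∧
  (∀ τ, τ < S.t S.N → ∃ w, ((w, τ), (w, τ + 1)) ∈ F)

/-- `S.IsParent i j` means `parent(j) = i`:  `i` is the least index greater than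
`j` such that `r_i` is uncovered and `SQball(j)`, `SQball(i)` are not
edge-disjoint. -/
def IsParent (i j : ℕ) : Prop :=
  1 ≤ j ∧ j < i ∧ i ≤ S.N ∧ S.uncovered j ∧ S.uncovered i ∧
    ¬ BallsEdgeDisjoint (S.req j) (S.ρ j) (S.req i) (S.ρ i) ∧
    ∀ k, j < k → k < i → S.uncovered k →
      BallsEdgeDisjoint (S.req j) (S.ρ j) (S.req k) (S.ρ k)

/-- A root: an uncovered request with no parent. -/
def IsRoot (i : ℕ) : Prop :=
  1 ≤ i ∧ i ≤ S.N ∧ S.uncovered i ∧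
    ∀ j, i < j → j ≤ S.N → S.uncovered j →
      BallsEdgeDisjoint (S.req i) (S.ρ i) (S.req j) (S.ρ j)

/-- `i ∈ Tree(iStar)`: one can go from `i` to `iStar` by repeatedly passing from
a child to its parent. -/
def InTree (i iStar : ℕ) : Prop :=
  Relation.ReflTransGen (fun a b => S.IsParent b a) i iStar

end SquareRun

lemma mem_repl {F : Finset GEdge} {q : Replica} :
    q ∈ Repl F ↔ q = ((0,0) : Replica) ∨ ∃ e ∈ F, q = e.1 ∨ q = e.2 := by
  rw [Repl, Set.mem_insert_iff]; rfl

lemma repl_mono {F G : Finset GEdge} (h : F ⊆ G) : Repl F ⊆ Repl G := by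
  intro q hq
  rcases mem_repl.mp hq with rfl | ⟨e, he, hq⟩
  · exact mem_repl.mpr (Or.inl rfl)
  · exact mem_repl.mpr (Or.inr ⟨e, h he, hq⟩)

lemma repl_union {F G : Finset GEdge} {q : Replica} :
    q ∈ Repl (F ∪ G) ↔ q ∈ Repl F ∨ q ∈ Repl G := by
  constructor
  · intro hq
    rcases mem_repl.mp hq with rfl | ⟨e, he, hq⟩
    · exact Or.inl (mem_repl.mpr (Or.inl rfl))
    · rcases Finset.mem_union.mp he with h | h
      · exact Or.inl (mem_repl.mpr (Or.inr ⟨e, h, hq⟩))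
      · exact Or.inr (mem_repl.mpr (Or.inr ⟨e, h, hq⟩))
  · rintro (h | h)
    · exact repl_mono Finset.subset_union_left h
    · exact repl_mono Finset.subset_union_right h

lemma mem_vertPath {u a b : ℕ} {e : GEdge} :
    e ∈ vertPath u a b ↔ ∃ r, r < b - a ∧ e = ((u, a + r), (u, a + r + 1)) := by
  simp [vertPath, Finset.mem_image, eq_comm]

lemma mem_horizPath {τ u w : ℕ} {e : GEdge} :
    e ∈ horizPath τ u w ↔ ∃ r, r < w - u ∧ e = ((u + r, τ), (u + r + 1, τ)) := by
  simp [horizPath, Finset.mem_image, eq_comm]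

lemma repl_vert_sub {u a b τ : ℕ} {F : Finset GEdge} (hFG : vertPath u a b ⊆ F)
    (h1 : a ≤ τ) (h2 : τ ≤ b) (h3 : a < b) : ((u, τ) : Replica) ∈ Repl F := by
  rcases lt_or_eq_of_le h2 with h2' | rfl
  · refine mem_repl.mpr (Or.inr ⟨((u, τ), (u, τ + 1)), hFG ?_, Or.inl rfl⟩)
    refine mem_vertPath.mpr ⟨τ - a, by omega, ?_⟩
    have : a + (τ - a) = τ := by omega
    rw [this]
  · refine mem_repl.mpr (Or.inr ⟨((u, τ - 1), (u, τ)), hFG ?_, Or.inr rfl⟩)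
    refine mem_vertPath.mpr ⟨τ - 1 - a, by omega, ?_⟩
    have h4 : a + (τ - 1 - a) = τ - 1 := by omega
    have h5 : τ - 1 + 1 = τ := by omega
    rw [h4, h5]

lemma repl_horiz_sub {τ u w x : ℕ} {F : Finset GEdge} (hFG : horizPath τ u w ⊆ F)
    (h1 : u ≤ x) (h2 : x ≤ w) (h3 : u < w) : ((x, τ) : Replica) ∈ Repl F := by
  rcases lt_or_eq_of_le h2 with h2' | rfl
  · refine mem_repl.mpr (Or.inr ⟨((x, τ), (x + 1, τ)), hFG ?_, Or.inl rfl⟩)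
    refine mem_horizPath.mpr ⟨x - u, by omega, ?_⟩
    have : u + (x - u) = x := by omega
    rw [this]
  · refine mem_repl.mpr (Or.inr ⟨((x - 1, τ), (x, τ)), hFG ?_, Or.inr rfl⟩)
    refine mem_horizPath.mpr ⟨x - 1 - u, by omega, ?_⟩
    have h4 : u + (x - 1 - u) = x - 1 := by omega
    have h5 : x - 1 + 1 = x := by omega
    rw [h4, h5]

lemma repl_vert_elim {u a b : ℕ} {q : Replica} (h : q ∈ Repl (vertPath u a b)) :
    q = ((0,0) : Replica) ∨ (q.1 = u ∧ a ≤ q.2 ∧ q.2 ≤ b) := by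
  rcases mem_repl.mp h with rfl | ⟨e, he, hq⟩
  · exact Or.inl rfl
  · obtain ⟨r, hr, rfl⟩ := mem_vertPath.mp he
    rcases hq with rfl | rfl <;> refine Or.inr ⟨rfl, ?_, ?_⟩ <;> dsimp only <;> omega

lemma repl_horiz_elim {τ u w : ℕ} {q : Replica} (h : q ∈ Repl (horizPath τ u w)) :
    q = ((0,0) : Replica) ∨ (q.2 = τ ∧ u ≤ q.1 ∧ q.1 ≤ w) := by
  rcases mem_repl.mp h with rfl | ⟨e, he, hq⟩
  · exact Or.inl rfl
  · obtain ⟨r, hr, rfl⟩ := mem_horizPath.mp he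
    rcases hq with rfl | rfl <;> refine Or.inr ⟨rfl, ?_, ?_⟩ <;> dsimp only <;> omega

namespace SquareRun

variable (S : SquareRun)

lemma sol_succ_sub {n : ℕ} (h1 : 1 ≤ n) (h2 : n ≤ S.N) :
    S.sol (n-1) ∪ vertPath 0 (S.t (n-1)) (S.t n) ⊆ S.sol n := by
  rw [S.step n h1 h2]
  intro e he
  exact Finset.mem_union_left _ (Finset.mem_union_left _ (Finset.mem_union_left _ he))

lemma sol_mono {m n : ℕ} (h : m ≤ n) (h2 : n ≤ S.N) : S.sol m ⊆ S.sol n := by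
  induction n with
  | zero => have : m = 0 := by omega
            subst this; exact subset_rfl
  | succ p ih =>
    rcases Nat.lt_or_ge m (p+1) with hm | hm
    · have h3 : S.sol p ⊆ S.sol (p+1) := by
        have := S.sol_succ_sub (n := p + 1) (by omega) h2
        simp only [Nat.add_sub_cancel] at this
        exact fun e he => this (Finset.mem_union_left _ he)
      exact (ih (by omega) (by omega)).trans h3
    · have : m = p + 1 := by omega
      subst this; exact subset_rfl

lemma mem_col {n τ : ℕ} (h1 : 1 ≤ n) (h2 : n ≤ S.N) (ha : S.ss n ≤ τ)
    (hb : τ ≤ S.t n + 4 * S.ρ n) : ((S.us n, τ) : Replica) ∈ Repl (S.sol n) := by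
  obtain ⟨hmem, hr⟩ := S.serv_mem n h1 h2
  simp only [SqRect, Set.mem_setOf_eq] at hr
  obtain ⟨hr1, hr2, hr3, hr4⟩ := hr
  have hstep := S.step n h1 h2
  have hsub4 : vertPath (S.us n) (S.ss n) (S.t n) ⊆ S.sol n := by
    rw [hstep]; intro e he
    exact Finset.mem_union_left _ (Finset.mem_union_left _ (Finset.mem_union_right _ he))
  have hsub5 : vertPath (S.us n) (S.t n) (S.t n + 4 * S.ρ n) ⊆ S.sol n := by
    rw [hstep]; intro e he
    exact Finset.mem_union_right _ he
  rcases le_or_gt τ (S.t n) with hτ | hτ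
  · rcases Nat.lt_or_ge (S.ss n) (S.t n) with h | h
    · exact repl_vert_sub hsub4 ha hτ h
    · have hτ2 : τ = S.ss n := by omega
      rw [hτ2]
      exact repl_mono (S.sol_succ_sub h1 h2) hmem
  · exact repl_vert_sub hsub5 (by omega) hb (by omega)

lemma mem_row {n x : ℕ} (h1 : 1 ≤ n) (h2 : n ≤ S.N) (ha : S.us n ≤ x)
    (hb : x ≤ S.v n) : ((x, S.t n) : Replica) ∈ Repl (S.sol n) := by
  obtain ⟨hmem, hr⟩ := S.serv_mem n h1 h2
  simp only [SqRect, Set.mem_setOf_eq] at hr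
  have hhoriz : horizPath (S.t n) (S.us n) (S.v n) ⊆ S.sol n := by
    rw [S.step n h1 h2]; intro e he
    exact Finset.mem_union_left _ (Finset.mem_union_right _ he)
  rcases eq_or_lt_of_le ha with rfl | hlt
  · exact S.mem_col h1 h2 hr.2.2.2 (by omega)
  · exact repl_horiz_sub hhoriz ha hb (by omega)

lemma creator {n x s : ℕ} (h1 : 1 ≤ n) (h2 : n ≤ S.N)
    (hq : ((x, s) : Replica) ∈ Repl (S.sol n)) :
    ((x, s) : Replica) ∈ Repl (S.sol (n-1)) ∨ x = 0 ∨
    (x = S.us n ∧ S.ss n ≤ s ∧ s ≤ S.t n + 4 * S.ρ n) ∨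
    (s = S.t n ∧ S.us n ≤ x ∧ x ≤ S.v n) := by
  obtain ⟨hmem, hr⟩ := S.serv_mem n h1 h2
  simp only [SqRect, Set.mem_setOf_eq] at hr
  rw [S.step n h1 h2] at hq
  rcases repl_union.mp hq with hq | hq
  · rcases repl_union.mp hq with hq | hq
    · rcases repl_union.mp hq with hq | hq
      · rcases repl_union.mp hq with hq | hq
        · exact Or.inl hq
        · rcases repl_vert_elim hq with h0 | ⟨h0, -⟩
          · exact Or.inr (Or.inl (congrArg Prod.fst h0))
          · exact Or.inr (Or.inl h0)
      · rcases repl_vert_elim hq with h0 | ⟨h0, ha, hb⟩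
        · exact Or.inr (Or.inl (congrArg Prod.fst h0))
        · dsimp only at h0 ha hb
          exact Or.inr (Or.inr (Or.inl ⟨h0, ha, by omega⟩))
    · rcases repl_horiz_elim hq with h0 | ⟨h0, ha, hb⟩
      · exact Or.inr (Or.inl (congrArg Prod.fst h0))
      · dsimp only at h0 ha hb
        exact Or.inr (Or.inr (Or.inr ⟨h0, ha, hb⟩))
  · rcases repl_vert_elim hq with h0 | ⟨h0, ha, hb⟩
    · exact Or.inr (Or.inl (congrArg Prod.fst h0))
    · dsimp only at h0 ha hb
      exact Or.inr (Or.inr (Or.inl ⟨h0, by omega, by omega⟩))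

lemma rho_min_nat {n x τ : ℕ} (h1 : 1 ≤ n) (h2 : n ≤ S.N)
    (hq : ((x, τ) : Replica) ∈ Repl (S.sol (n-1) ∪ vertPath 0 (S.t (n-1)) (S.t n)))
    (hx : x ≤ S.v n) (hτ : τ ≤ S.t n) :
    S.ρ n ≤ max (S.v n - x) (S.t n - τ) := by
  have h := S.rho_min n h1 h2 _ hq
  rw [distInf] at h
  rw [if_pos (⟨hx, hτ⟩ : ((x, τ) : Replica).1 ≤ ((S.v n, S.t n) : Replica).1 ∧
      ((x, τ) : Replica).2 ≤ ((S.v n, S.t n) : Replica).2)] at h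
  exact_mod_cast h

lemma serv_min_nat {n x τ : ℕ} (h1 : 1 ≤ n) (h2 : n ≤ S.N)
    (hq : ((x, τ) : Replica) ∈ Repl (S.sol (n-1) ∪ vertPath 0 (S.t (n-1)) (S.t n)))
    (hc1 : S.v n - 5 * S.ρ n ≤ x) (hc2 : x ≤ S.v n)
    (hc3 : S.t n - 5 * S.ρ n ≤ τ) (hc4 : τ ≤ S.t n) : S.us n ≤ x := by
  have := S.serv_min n h1 h2 (x, τ) hq (by
    simp only [SqRect, Set.mem_setOf_eq]
    exact ⟨hc1, hc2, hc3, hc4⟩)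
  exact this

lemma repl_sol_step {m n : ℕ} (hmn : m ≤ n - 1) (h2 : n ≤ S.N) {q : Replica}
    (hq : q ∈ Repl (S.sol m)) :
    q ∈ Repl (S.sol (n-1) ∪ vertPath 0 (S.t (n-1)) (S.t n)) :=
  repl_mono Finset.subset_union_left (repl_mono (S.sol_mono hmn (by omega)) hq)

lemma closest_nat {n : ℕ} (h1 : 1 ≤ n) (h2 : n ≤ S.N) :
    S.u' n ≤ S.v n ∧ S.s' n ≤ S.t n ∧
      max (S.v n - S.u' n) (S.t n - S.s' n) = S.ρ n := by
  have h := S.closest_dist n h1 h2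
  rw [distInf] at h
  split_ifs at h with hc
  · exact ⟨hc.1, hc.2, by exact_mod_cast h⟩
  · exact absurd h.symm (by simp)

end SquareRun

lemma overlap_head {a b a' b' ρ ρ' : ℕ}
    (h : ¬ BallsEdgeDisjoint (a, b) ρ (a', b') ρ') :
    ∃ x y : ℕ, x ≤ a ∧ y ≤ b ∧ x ≤ a' ∧ y ≤ b' ∧
      a - x + (b - y) + 1 ≤ ρ ∧ a' - x + (b' - y) + 1 ≤ ρ' := by
  unfold BallsEdgeDisjoint at h
  push_neg at h
  obtain ⟨⟨⟨p, q⟩, c, d⟩, ⟨hg, ht1, hh1⟩, ⟨-, ht2, hh2⟩⟩ := h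
  simp only [qball, Set.mem_setOf_eq] at ht1 hh1 ht2 hh2
  rcases hg with hg | hg <;>
    simp only [isHoriz, isArc, Prod.mk.injEq] at hg <;>
    exact ⟨c, d, by omega, by omega, by omega, by omega, by omega, by omega⟩

lemma disj_consequence {a b a' b' ρ ρ' : ℕ}
    (h : BallsEdgeDisjoint (a, b) ρ (a', b') ρ') (x y : ℕ) (hx : 1 ≤ x)
    (hxa : x ≤ a) (hyb : y ≤ b) (hxa' : x ≤ a') (hyb' : y ≤ b') :
    ρ < a - x + (b - y) + 1 ∨ ρ' < a' - x + (b' - y) + 1 := by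
  by_contra hcon
  push_neg at hcon
  refine h ((x - 1, y), (x, y)) ⟨⟨Or.inl ?g1, ?g2, ?g3⟩, Or.inl ?g4, ?g5, ?g6⟩
  case g1 => simp only [isHoriz, Prod.mk.injEq, and_true]; omega
  case g4 => simp only [isHoriz, Prod.mk.injEq, and_true]; omega
  case g2 => simp only [qball, Set.mem_setOf_eq]; omega
  case g3 => simp only [qball, Set.mem_setOf_eq]; omega
  case g5 => simp only [qball, Set.mem_setOf_eq]; omega
  case g6 => simp only [qball, Set.mem_setOf_eq]; omega

set_option maxHeartbeats 1600000 in
/-- If `j` and `k` are children of an uncovered request `i` with `k < j`, then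
`t_j − ρ(j) ≥ t_k + 4ρ(k)`. -/
theorem sibling_time_gap (S : SquareRun) (i j k : ℕ)
    (hpj : S.IsParent i j) (hpk : S.IsParent i k) (hkj : k < j) :
    (S.t k : ℤ) + 4 * S.ρ k ≤ (S.t j : ℤ) - S.ρ j := by
  obtain ⟨hj1, hji, hiN, huncj, hunci, hovji, -⟩ := hpj
  obtain ⟨hk1, -, -, hunck, -, hovki, hmink⟩ := hpk
  have hjN : j ≤ S.N := by omega
  have hkN : k ≤ S.N := by omega
  have hi1 : 1 ≤ i := by omega
  have htkj : S.t k ≤ S.t j := S.t_mono k j (by omega) hjN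
  have htji : S.t j ≤ S.t i := S.t_mono j i (by omega) hiN
  have hrj := (S.serv_mem j hj1 hjN).2
  have hrk := (S.serv_mem k hk1 hkN).2
  have hri := (S.serv_mem i hi1 hiN).2
  simp only [SqRect, Set.mem_setOf_eq] at hrj hrk hri
  obtain ⟨hrj1, hrj2, hrj3, hrj4⟩ := hrj
  obtain ⟨hrk1, hrk2, hrk3, hrk4⟩ := hrk
  obtain ⟨hri1, hri2, hri3, hri4⟩ := hri
  have hUj : 1 ≤ S.ρ j ∧ S.v j < S.us j + S.ρ j := by
    simp only [SquareRun.uncovered, SquareRun.covered] at huncj; omega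
  have hUk : 1 ≤ S.ρ k ∧ S.v k < S.us k + S.ρ k := by
    simp only [SquareRun.uncovered, SquareRun.covered] at hunck; omega
  have hUi : 1 ≤ S.ρ i ∧ S.v i < S.us i + S.ρ i := by
    simp only [SquareRun.uncovered, SquareRun.covered] at hunci; omega
  obtain ⟨y1, y2, hyj1, hyj2, hyi1, hyi2, hyj3, hyi3⟩ :=
    overlap_head (by simpa [SquareRun.req] using hovji)
  obtain ⟨z1, z2, hzk1, hzk2, hzi1, hzi2, hzk3, hzi3⟩ :=
    overlap_head (by simpa [SquareRun.req] using hovki)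
  have hAj : S.v i < S.us j := by
    by_contra hA
    push_neg at hA
    have hp : ((min (S.v i) (S.v j), S.t j) : Replica) ∈ Repl (S.sol j) :=
      S.mem_row hj1 hjN (le_min hA hrj2) (min_le_right _ _)
    have hp2 : ((min (S.v i) (S.v j), S.t j) : Replica) ∈
        Repl (S.sol (i-1) ∪ vertPath 0 (S.t (i-1)) (S.t i)) :=
      S.repl_sol_step (show j ≤ i - 1 by omega) (by omega) hp
    have hsm := S.serv_min_nat hi1 hiN hp2 (by omega) (by omega) (by omega) (by omega)
    have hrm := S.rho_min_nat hi1 hiN hp2 (by omega) (by omega)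
    omega
  have hAk : S.v i < S.us k := by
    by_contra hA
    push_neg at hA
    have htki : S.t k ≤ S.t i := le_trans htkj htji
    have hp : ((min (S.v i) (S.v k), S.t k) : Replica) ∈ Repl (S.sol k) :=
      S.mem_row hk1 hkN (le_min hA hrk2) (min_le_right _ _)
    have hp2 : ((min (S.v i) (S.v k), S.t k) : Replica) ∈
        Repl (S.sol (i-1) ∪ vertPath 0 (S.t (i-1)) (S.t i)) :=
      S.repl_sol_step (show k ≤ i - 1 by omega) (by omega) hp
    have hsm := S.serv_min_nat hi1 hiN hp2 (by omega) (by omega) (by omega) (by omega)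
    have hrm := S.rho_min_nat hi1 hiN hp2 (by omega) (by omega)
    omega
  rcases le_or_gt (S.t k + 4 * S.ρ k + S.ρ j) (S.t j) with hok | hC
  · omega
  exfalso
  rcases le_or_gt (S.us k) (S.v j) with hcase | hcase
  · -- case α
    have hpt : ((S.us k, min (S.t j) (S.t k + 4 * S.ρ k)) : Replica) ∈ Repl (S.sol k) :=
      S.mem_col hk1 hkN (by omega) (by omega)
    have hpt2 : ((S.us k, min (S.t j) (S.t k + 4 * S.ρ k)) : Replica) ∈
        Repl (S.sol (j-1) ∪ vertPath 0 (S.t (j-1)) (S.t j)) :=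
      S.repl_sol_step (show k ≤ j - 1 by omega) (by omega) hpt
    have hrm := S.rho_min_nat hj1 hjN hpt2 hcase (by omega)
    omega
  · -- case β
    have hdisjkj : BallsEdgeDisjoint (S.req k) (S.ρ k) (S.req j) (S.ρ j) :=
      hmink j hkj hji huncj
    have hD1 : S.t k + S.ρ j ≤ S.t j := by
      have hdc := disj_consequence (a := S.v k) (b := S.t k) (a' := S.v j) (b' := S.t j)
        (by simpa [SquareRun.req] using hdisjkj) (S.v j) (S.t k)
        (by omega) (by omega) (by omega) (by omega) (by omega)
      omega
    have KEY : ∀ n, n ≤ j - 1 → ∀ x s : ℕ, ((x, s) : Replica) ∈ Repl (S.sol n) →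
        S.v i < x → x ≤ S.v j → S.t k ≤ s + 5 * S.ρ k → False := by
      intro n
      induction n using Nat.strong_induction_on with
      | _ n IH =>
      intro hn x s hxs hx1 hx2 hs
      rcases Nat.eq_zero_or_pos n with rfl | hn1
      · rw [S.sol_zero] at hxs
        rcases mem_repl.mp hxs with h0 | ⟨e, he, -⟩
        · have : x = 0 := congrArg Prod.fst h0
          omega
        · simp at he
      · have hnN : n ≤ S.N := by omega
        have hrn := (S.serv_mem n hn1 hnN).2
        simp only [SqRect, Set.mem_setOf_eq] at hrn
        obtain ⟨hrn1, hrn2, hrn3, hrn4⟩ := hrn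
        have hrec : k < n → S.v i < S.us n → S.us n ≤ S.v j → False := by
          intro hkn hs1 hs2
          have hserv := (S.serv_mem n hn1 hnN).1
          have hserv' : ((S.us n, S.ss n) : Replica) ∈ Repl (S.sol (n-1)) := by
            rcases repl_union.mp hserv with h | h
            · exact h
            · rcases repl_vert_elim h with h0 | ⟨h0, -⟩
              · have : S.us n = 0 := congrArg Prod.fst h0
                omega
              · dsimp only at h0; omega
          rcases le_or_gt (S.t k) (S.ss n + 5 * S.ρ k) with hgood | hbad
          · exact IH (n-1) (by omega) (by omega) _ _ hserv' hs1 hs2 hgood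
          · have htkn : S.t k ≤ S.t n := S.t_mono k n (by omega) hnN
            have htnj : S.t n ≤ S.t j := S.t_mono n j (by omega) hjN
            have hpt : ((S.us n, min (S.t j) (S.t n + 4 * S.ρ n)) : Replica) ∈
                Repl (S.sol n) := S.mem_col hn1 hnN (by omega) (by omega)
            have hpt2 : ((S.us n, min (S.t j) (S.t n + 4 * S.ρ n)) : Replica) ∈
                Repl (S.sol (j-1) ∪ vertPath 0 (S.t (j-1)) (S.t j)) :=
              S.repl_sol_step (show n ≤ j - 1 by omega) (by omega) hpt
            have hrm := S.rho_min_nat hj1 hjN hpt2 (by omega) (by omega)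
            omega
        rcases S.creator hn1 hnN hxs with hprev | h0 | ⟨hcol1, hcol2, hcol3⟩ |
          ⟨hrow1, hrow2, hrow3⟩
        · exact IH (n-1) (by omega) (by omega) x s hprev hx1 hx2 hs
        · omega
        · rcases le_or_gt n k with hnk | hnk
          · have hnek : n ≠ k := by
              intro h; rw [h] at hcol1; omega
            have htnk : S.t n ≤ S.t k := S.t_mono n k hnk hkN
            have hq : ((x, min s (S.t k)) : Replica) ∈ Repl (S.sol n) := by
              rcases le_or_gt s (S.t k) with hstk | hstk
              · rw [min_eq_left hstk]; exact hxs
              · rw [min_eq_right (le_of_lt hstk), hcol1]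
                exact S.mem_col hn1 hnN (by omega) (by omega)
            have hq2 : ((x, min s (S.t k)) : Replica) ∈
                Repl (S.sol (k-1) ∪ vertPath 0 (S.t (k-1)) (S.t k)) :=
              S.repl_sol_step (show n ≤ k - 1 by omega) (by omega) hq
            have hsm := S.serv_min_nat hk1 hkN hq2 (by omega) (by omega) (by omega)
              (by omega)
            omega
          · exact hrec hnk (by omega) (by omega)
        · rcases le_or_gt n k with hnk | hnk
          · have hnek : n ≠ k := by
              intro h; rw [h] at hrow2; omega
            have htnk : S.t n ≤ S.t k := S.t_mono n k hnk hkN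
            have hq2 : ((x, s) : Replica) ∈
                Repl (S.sol (k-1) ∪ vertPath 0 (S.t (k-1)) (S.t k)) :=
              S.repl_sol_step (show n ≤ k - 1 by omega) (by omega) hxs
            have hsm := S.serv_min_nat hk1 hkN hq2 (by omega) (by omega) (by omega)
              (by omega)
            omega
          · rcases le_or_gt (S.us n) (S.v i) with hui | hui
            · have htkn : S.t k ≤ S.t n := S.t_mono k n (by omega) hnN
              have htni : S.t n ≤ S.t i := S.t_mono n i (by omega) hiN
              have hviq : ((S.v i, S.t n) : Replica) ∈ Repl (S.sol n) :=
                S.mem_row hn1 hnN hui (by omega)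
              have hq2 : ((S.v i, S.t n) : Replica) ∈
                  Repl (S.sol (i-1) ∪ vertPath 0 (S.t (i-1)) (S.t i)) :=
                S.repl_sol_step (show n ≤ i - 1 by omega) (by omega) hviq
              have hrm := S.rho_min_nat hi1 hiN hq2 (by omega) htni
              omega
            · exact hrec hnk hui (by omega)
    obtain ⟨hc1, hc2, hc3⟩ := S.closest_nat hj1 hjN
    have hcm := S.closest_mem j hj1 hjN
    have hcmj : ((S.u' j, S.s' j) : Replica) ∈ Repl (S.sol j) :=
      repl_mono (S.sol_succ_sub hj1 hjN) hcm
    have hu'v : S.v i < S.u' j := by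
      by_contra hcon
      push_neg at hcon
      have hq2 : ((S.u' j, S.s' j) : Replica) ∈
          Repl (S.sol (i-1) ∪ vertPath 0 (S.t (i-1)) (S.t i)) :=
        S.repl_sol_step (show j ≤ i - 1 by omega) (by omega) hcmj
      have hrm := S.rho_min_nat hi1 hiN hq2 hcon (by omega)
      omega
    have hcm' : ((S.u' j, S.s' j) : Replica) ∈ Repl (S.sol (j-1)) := by
      rcases repl_union.mp hcm with h | h
      · exact h
      · rcases repl_vert_elim h with h0 | ⟨h0, -⟩
        · have : S.u' j = 0 := congrArg Prod.fst h0
          omega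
        · dsimp only at h0; omega
    exact KEY (j-1) le_rfl (S.u' j) (S.s' j) hcm' hu'v hc1 (by omega)
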